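/- Let e_1, ..., e_{N} be i.i.d. real-valued continuous random variables with distribution induced by a(e) where a is measurable, and let ε, δ ∈ (0,1). Define n* := min{ n ∈ ℕ : Σ_{m=0}^{n−1} C(N,m) (1−ε)^m ε^{N−m} ≥ 1 − δ }, and let α be the n*-th smallest value among a(e_1),...,a(e_N), assuming N ≥ log_{1−ε} δ so that n* exists and n* ≤ N. Then with probability at least 1 − δ over the sample, a fresh independent draw e satisfies Pr[a(e) ≤ α] ≥ 1 − ε. -/

import Mathlib

open MeasureTheory ProbabilityTheory Set

set_option linter.unnecessarySeqFocus false

lemma countP_ofFn {N : ℕ} (f : Fin N → ℝ) (q : ℝ) :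
    (List.ofFn f).countP (fun x => decide (x < q)) =
      (Finset.univ.filter fun i => f i < q).card := by
  rw [List.ofFn_eq_map, List.countP_map, List.countP_eq_length_filter]
  rw [Finset.card_filter]
  simp only [Finset.sum, Fin.univ_def, Finset.filter]
  induction (List.finRange N) with
  | nil => simp
  | cons a l ih =>
      by_cases h : f a < q <;> simp [h, Function.comp, List.filter_cons, ih] <;> omega

lemma orderstat_ge {N : ℕ} (f : Fin N → ℝ) (q : ℝ) (k : ℕ) (hk : k < N)
    (hcount : (Finset.univ.filter fun i => f i < q).card ≤ k) :
    q ≤ ((List.ofFn f).mergeSort (· ≤ ·)).getD k 0 := by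
  set s := (List.ofFn f).mergeSort (· ≤ ·) with hs
  have hlen : s.length = N := by simp [hs]
  have hsort : s.Pairwise (· ≤ ·) := List.pairwise_mergeSort' _ _
  have hperm : s.Perm (List.ofFn f) := List.mergeSort_perm _ _
  by_contra h
  push_neg at h
  have hkl : k < s.length := hlen ▸ hk
  rw [List.getD_eq_getElem s 0 hkl] at h
  -- all elements of take (k+1) s are < q
  have htake : ∀ x ∈ s.take (k+1), x < q := by
    intro x hx
    obtain ⟨j, hj, rfl⟩ := List.mem_iff_getElem.1 hx
    have hjlen : j < s.length := lt_of_lt_of_le hj (by simp [List.length_take])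
    have hjk : j ≤ k := by
      have := hj
      simp [List.length_take] at this
      omega
    rw [List.getElem_take]
    calc s[j] ≤ s[k] := by
          rcases eq_or_lt_of_le hjk with h' | h'
          · subst h'; exact le_rfl
          · exact List.Pairwise.rel_get_of_lt hsort (by simpa using h')
      _ < q := h
  have hcnt1 : (s.take (k+1)).countP (fun x => decide (x < q)) = k+1 := by
    rw [List.countP_eq_length.2 (by intro x hx; simpa using htake x hx)]
    simp [List.length_take]
    omega
  have hcnt2 : (s.take (k+1)).countP (fun x => decide (x < q)) ≤
      s.countP (fun x => decide (x < q)) := (List.take_sublist _ _).countP_le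
  have hcnt3 : s.countP (fun x => decide (x < q)) =
      (List.ofFn f).countP (fun x => decide (x < q)) := hperm.countP_eq _
  have := countP_ofFn f q
  omega


lemma quantile_exists (μ : Measure ℝ) [IsProbabilityMeasure μ]
    (hcont : ∀ x : ℝ, μ {x} = 0) {t : ℝ} (ht0 : 0 < t) (ht1 : t < 1) :
    ∃ q : ℝ, μ (Set.Iic q) = ENNReal.ofReal t ∧ μ (Set.Iio q) = ENNReal.ofReal t := by
  have hll : ∀ x, Function.leftLim (cdf μ) x = cdf μ x := by
    intro x
    have h1 : (cdf μ).measure {x} = ENNReal.ofReal (cdf μ x - Function.leftLim (cdf μ) x) :=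
      (cdf μ).measure_singleton x
    rw [measure_cdf, hcont x] at h1
    have h2 : Function.leftLim (cdf μ) x ≤ cdf μ x := (monotone_cdf μ).leftLim_le le_rfl
    have h3 : cdf μ x - Function.leftLim (cdf μ) x ≤ 0 := by
      by_contra h
      push_neg at h
      rw [eq_comm, ENNReal.ofReal_eq_zero] at h1
      linarith
    linarith
  have hc : Continuous (cdf μ) := by
    rw [continuous_iff_continuousAt]
    intro x
    rw [(monotone_cdf μ).continuousAt_iff_leftLim_eq_rightLim]
    rw [hll, (cdf μ).rightLim_eq]
  -- find a with cdf < t and b with cdf > t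
  obtain ⟨a, ha⟩ := ((tendsto_cdf_atBot (μ := μ)).eventually (eventually_lt_nhds ht0)).exists
  obtain ⟨b, hb⟩ := ((tendsto_cdf_atTop (μ := μ)).eventually (eventually_gt_nhds ht1)).exists
  have hab : a ≤ b := by
    by_contra h
    push_neg at h
    have := monotone_cdf (μ := μ) h.le
    linarith
  have : t ∈ Icc (cdf μ a) (cdf μ b) := ⟨ha.le, hb.le⟩
  obtain ⟨q, _, hq⟩ := intermediate_value_Icc hab hc.continuousOn this
  refine ⟨q, ?_, ?_⟩
  · rw [← ofReal_cdf, hq]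
  · have : μ (Set.Iio q) = μ (Set.Iic q) := by
      have h0 := hcont q
      have : Set.Iic q = Set.Iio q ∪ {q} := (Iio_union_right).symm
      rw [this, measure_union (by simp) (measurableSet_singleton q), h0, add_zero]
    rw [this, ← ofReal_cdf, hq]

lemma binom_lower {Ω : Type*} [MeasurableSpace Ω] (P : Measure Ω) [IsProbabilityMeasure P]
    {N : ℕ} (Y : Fin N → Ω → ℝ) (hmeas : ∀ i, Measurable (Y i))
    (hindep : iIndepFun Y P)
    (q t : ℝ) (ht0 : 0 ≤ t) (ht1 : t ≤ 1)
    (hp : ∀ i, P (Y i ⁻¹' Set.Iio q) = ENNReal.ofReal t) (n : ℕ) :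
    ENNReal.ofReal (∑ m ∈ Finset.range n, (N.choose m : ℝ) * t ^ m * (1 - t) ^ (N - m))
      ≤ P {ω | (Finset.univ.filter fun i => Y i ω < q).card < n} := by
  classical
  set sets : Finset (Fin N) → Fin N → Set ℝ :=
    fun S i => if i ∈ S then Set.Iio q else (Set.Iio q)ᶜ with hsets
  set C : Finset (Fin N) → Set Ω := fun S => ⋂ i, Y i ⁻¹' sets S i with hC
  have hCmem : ∀ S ω, ω ∈ C S ↔ ∀ i, (Y i ω < q ↔ i ∈ S) := by
    intro S ω
    simp only [hC, Set.mem_iInter, Set.mem_preimage, hsets]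
    refine forall_congr' fun i => ?_
    by_cases hi : i ∈ S <;> simp [hi]
  -- the event as a disjoint union
  set T : Finset (Finset (Fin N)) := Finset.univ.filter (fun S => S.card < n) with hT
  have hE : {ω | (Finset.univ.filter fun i => Y i ω < q).card < n} = ⋃ S ∈ T, C S := by
    ext ω
    simp only [Set.mem_setOf_eq, Set.mem_iUnion, hT, Finset.mem_filter, Finset.mem_univ,
      true_and]
    constructor
    · intro h
      exact ⟨Finset.univ.filter fun i => Y i ω < q, h, (hCmem _ ω).2 (by simp)⟩
    · rintro ⟨S, hS, hω⟩
      have : (Finset.univ.filter fun i => Y i ω < q) = S := by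
        ext i
        simpa using (hCmem S ω).1 hω i
      rwa [this]
  -- measurability
  have hsetsM : ∀ S i, MeasurableSet (sets S i) := by
    intro S i
    by_cases hi : i ∈ S <;> simp [hsets, hi, measurableSet_Iio, (measurableSet_Iio).compl]
  have hCM : ∀ S, MeasurableSet (C S) := fun S =>
    MeasurableSet.iInter fun i => (hmeas i) (hsetsM S i)
  -- disjointness
  have hdisj : (T : Set (Finset (Fin N))).PairwiseDisjoint C := by
    intro S hS S' hS' hne
    refine Set.disjoint_left.2 fun ω h1 h2 => hne ?_
    ext i
    rw [← (hCmem S ω).1 h1 i, (hCmem S' ω).1 h2 i]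
  -- probability of each cell
  have hcell : ∀ S : Finset (Fin N),
      P (C S) = ENNReal.ofReal t ^ S.card * ENNReal.ofReal (1 - t) ^ (N - S.card) := by
    intro S
    have h1 : C S = ⋂ i ∈ Finset.univ, Y i ⁻¹' sets S i := by simp [hC]
    rw [h1, hindep.measure_inter_preimage_eq_mul Finset.univ (fun i _ => hsetsM S i)]
    have hfac : ∀ i, P (Y i ⁻¹' sets S i) =
        if i ∈ S then ENNReal.ofReal t else ENNReal.ofReal (1 - t) := by
      intro i
      by_cases hi : i ∈ S
      · simp [hsets, hi, hp i]
      · simp only [hsets, hi, if_false]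
        rw [Set.preimage_compl, measure_compl ((hmeas i) measurableSet_Iio) (measure_ne_top _ _),
          hp i, measure_univ, ← ENNReal.ofReal_one, ← ENNReal.ofReal_sub _ ht0]
    rw [Finset.prod_congr rfl (fun i _ => hfac i), Finset.prod_ite, Finset.prod_const,
      Finset.prod_const, Finset.filter_univ_mem]
    have h2 : Finset.univ.filter (fun i => i ∉ S) = Sᶜ := by ext i; simp
    rw [h2, Finset.card_compl, Fintype.card_fin]
  -- total probability of the union
  rw [hE, measure_biUnion_finset hdisj (fun S _ => hCM S)]
  have hsum : ∀ S ∈ T, P (C S) = ENNReal.ofReal t ^ S.card * ENNReal.ofReal (1 - t) ^ (N - S.card) :=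
    fun S _ => hcell S
  rw [Finset.sum_congr rfl hsum]
  -- regroup by cardinality
  have hTb : T = (Finset.range n).biUnion (fun m => Finset.powersetCard m Finset.univ) := by
    ext S
    simp [hT, Finset.mem_powersetCard_univ, eq_comm]
  rw [hTb, Finset.sum_biUnion ?hd]
  case hd =>
    intro m hm m' hm' hne
    simp only [Finset.disjoint_left]
    intro S hS hS'
    simp [Finset.mem_powersetCard_univ] at hS hS'
    exact hne (hS ▸ hS')
  have hterm : ∀ m ∈ Finset.range n, 0 ≤ (N.choose m : ℝ) * t ^ m * (1 - t) ^ (N - m) := by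
    intro m _
    have h1 : (0:ℝ) ≤ 1 - t := by linarith
    positivity
  rw [ENNReal.ofReal_sum_of_nonneg hterm]
  refine le_of_eq (Finset.sum_congr rfl fun m hm => ?_)
  rw [Finset.sum_congr rfl (fun S hS => by
    rw [(Finset.mem_powersetCard_univ.1 hS : S.card = m)]), Finset.sum_const,
    Finset.card_powersetCard, Finset.card_univ, Fintype.card_fin]
  rw [ENNReal.ofReal_mul (by positivity), ENNReal.ofReal_mul (by positivity),
    ENNReal.ofReal_pow ht0, ENNReal.ofReal_pow (by linarith), ENNReal.ofReal_natCast]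
  rw [nsmul_eq_mul, mul_assoc]

/-- Order-statistic coverage guarantee (core of Theorem 1): if `Y i` are the
i.i.d. scores `a(e_i)` with common atomless law `μ`, `n*` the calibration
index and `α` the `n*`-th smallest score, then with probability at least
`1 - δ` over the sample, a fresh draw satisfies `Pr[a(e) ≤ α] ≥ 1 - ε`. -/
theorem stmt_4
    {Ω : Type*} [MeasurableSpace Ω] (P : Measure Ω) [IsProbabilityMeasure P]
    (ε δ : ℝ) (hε : ε ∈ Set.Ioo (0 : ℝ) 1) (hδ : δ ∈ Set.Ioo (0 : ℝ) 1)
    (N : ℕ) (hN : Real.logb (1 - ε) δ ≤ (N : ℝ))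
    (Y : Fin N → Ω → ℝ) (hmeas : ∀ i, Measurable (Y i))
    (hindep : ProbabilityTheory.iIndepFun Y P)
    (μ : Measure ℝ) [IsProbabilityMeasure μ] (hlaw : ∀ i, P.map (Y i) = μ)
    (hcont : ∀ x : ℝ, μ {x} = 0)
    (nstar : ℕ)
    (hnstar : nstar = sInf {n : ℕ | 1 - δ ≤
      ∑ m ∈ Finset.range n, (N.choose m : ℝ) * (1 - ε) ^ m * ε ^ (N - m)})
    (α : Ω → ℝ)
    (hα : ∀ ω, α ω =
      ((List.ofFn fun i => Y i ω).mergeSort (· ≤ ·)).getD (nstar - 1) 0) :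
    ENNReal.ofReal (1 - δ) ≤
      P {ω | ENNReal.ofReal (1 - ε) ≤ μ (Set.Iic (α ω))} := by
  obtain ⟨hε0, hε1⟩ := hε
  obtain ⟨hδ0, hδ1⟩ := hδ
  set t : ℝ := 1 - ε with htdef
  have ht0 : 0 < t := by simp [htdef]; linarith
  have ht1 : t < 1 := by simp [htdef]; linarith
  -- (1-ε)^N ≤ δ
  have hlog1 : Real.log t < 0 := Real.log_neg ht0 ht1
  have hpow : t ^ N ≤ δ := by
    rw [← Real.log_le_log_iff (by positivity) hδ0, Real.log_pow]
    have := (div_le_iff_of_neg hlog1).1 (by simpa [Real.logb] using hN)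
    linarith
  -- the defining set is nonempty: N belongs
  set Sdef : Set ℕ := {n : ℕ | 1 - δ ≤
      ∑ m ∈ Finset.range n, (N.choose m : ℝ) * t ^ m * ε ^ (N - m)} with hSdef
  have hbinom : ∑ m ∈ Finset.range (N + 1), (N.choose m : ℝ) * t ^ m * ε ^ (N - m) = 1 := by
    have h := add_pow t ε N
    rw [show t + ε = (1:ℝ) by rw [htdef]; ring, one_pow] at h
    calc ∑ m ∈ Finset.range (N + 1), (N.choose m : ℝ) * t ^ m * ε ^ (N - m)
        = ∑ m ∈ Finset.range (N + 1), t ^ m * ε ^ (N - m) * (N.choose m : ℝ) :=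
          Finset.sum_congr rfl (fun x _ => by ring)
      _ = 1 := h.symm
  have hNmem : N ∈ Sdef := by
    have hsplit := Finset.sum_range_succ
      (fun m => (N.choose m : ℝ) * t ^ m * ε ^ (N - m)) N
    simp only [Nat.choose_self, Nat.cast_one, one_mul, Nat.sub_self, pow_zero, mul_one] at hsplit
    have : ∑ m ∈ Finset.range N, (N.choose m : ℝ) * t ^ m * ε ^ (N - m) = 1 - t ^ N := by
      rw [hsplit] at hbinom; linarith
    simp only [hSdef, Set.mem_setOf_eq, this]
    linarith
  have hne : Sdef.Nonempty := ⟨N, hNmem⟩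
  have hnsmem : nstar ∈ Sdef := hnstar ▸ Nat.sInf_mem hne
  have hnsle : nstar ≤ N := hnstar ▸ Nat.sInf_le hNmem
  have hns1 : 1 ≤ nstar := by
    rcases Nat.eq_zero_or_pos nstar with h | h
    · exfalso
      have := hnsmem
      rw [h] at this
      simp [hSdef] at this
      linarith
    · exact h
  have hNpos : 0 < N := lt_of_lt_of_le hns1 hnsle
  -- quantile
  obtain ⟨q, hqc, hqo⟩ := quantile_exists μ hcont ht0 ht1
  have hp : ∀ i, P (Y i ⁻¹' Set.Iio q) = ENNReal.ofReal t := by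
    intro i
    rw [← Measure.map_apply (hmeas i) measurableSet_Iio, hlaw i, hqo]
  -- event inclusion
  have hsub : {ω | (Finset.univ.filter fun i => Y i ω < q).card < nstar}
      ⊆ {ω | ENNReal.ofReal (1 - ε) ≤ μ (Set.Iic (α ω))} := by
    intro ω hω
    simp only [Set.mem_setOf_eq] at hω ⊢
    have hk : nstar - 1 < N := by omega
    have hcard : (Finset.univ.filter fun i => Y i ω < q).card ≤ nstar - 1 := by omega
    have hge : q ≤ α ω := by
      rw [hα ω]
      exact orderstat_ge (fun i => Y i ω) q (nstar - 1) hk hcard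
    calc ENNReal.ofReal (1 - ε) = μ (Set.Iic q) := hqc.symm
      _ ≤ μ (Set.Iic (α ω)) := measure_mono (Set.Iic_subset_Iic.2 hge)
  calc ENNReal.ofReal (1 - δ)
      ≤ ENNReal.ofReal (∑ m ∈ Finset.range nstar, (N.choose m : ℝ) * t ^ m * (1 - t) ^ (N - m)) := by
        apply ENNReal.ofReal_le_ofReal
        have := hnsmem
        simp only [hSdef, Set.mem_setOf_eq] at this
        rw [show (1:ℝ) - t = ε by rw [htdef]; ring]
        exact this
    _ ≤ P {ω | (Finset.univ.filter fun i => Y i ω < q).card < nstar} :=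
        binom_lower P Y hmeas hindep q t ht0.le ht1.le hp nstar
    _ ≤ P {ω | ENNReal.ofReal (1 - ε) ≤ μ (Set.Iic (α ω))} := measure_mono hsub
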